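/- With F(ψ) = k/sin²(λψ + ψ₀), G(ψ) = cos(λψ + ψ₀), and I_λ = U^λ G as above, for any nonnegative integer ν the function X_L^ν(I_λ) is also a first integral of H = ½p_r² + (1/r²)(½p_ψ² + F(ψ)). -/

import Mathlib

open Real

/- Phase space coordinates: `x 0 = r`, `x 1 = ψ`, `x 2 = p_r`, `x 3 = p_ψ`. -/

/-- Partial derivative with respect to the `i`-th coordinate. -/
noncomputable def pd (i : Fin 4) (f : (Fin 4 → ℝ) → ℝ) (x : Fin 4 → ℝ) : ℝ :=
  deriv (fun t => f (Function.update x i t)) (x i)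

/-- The angular Hamiltonian `L = ½ p_ψ² + F(ψ)`. -/
noncomputable def Lfun (F : ℝ → ℝ) (x : Fin 4 → ℝ) : ℝ :=
  (1/2) * (x 3)^2 + F (x 1)

/-- The Hamiltonian vector field `X_L = p_ψ ∂/∂ψ − F'(ψ) ∂/∂p_ψ` as an operator. -/
noncomputable def XL (F : ℝ → ℝ) (f : (Fin 4 → ℝ) → ℝ) (x : Fin 4 → ℝ) : ℝ :=
  x 3 * pd 1 f x - deriv F (x 1) * pd 3 f x

/-- The Hamiltonian `H = ½ p_r² + (½ p_ψ² + F(ψ))/r²`. -/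
noncomputable def Hfun (F : ℝ → ℝ) (x : Fin 4 → ℝ) : ℝ :=
  (1/2) * (x 2)^2 + (1 / (x 0)^2) * ((1/2) * (x 3)^2 + F (x 1))

/-- The operator `U = p_r + (μ/r) X_L` (multiplication by `p_r` plus `(μ/r)·X_L`). -/
noncomputable def Uop (μ : ℝ) (F : ℝ → ℝ) (f : (Fin 4 → ℝ) → ℝ) (x : Fin 4 → ℝ) : ℝ :=
  x 2 * f x + (μ / x 0) * XL F f x

/-- The Hamiltonian vector field of `K` applied to `f`. -/
noncomputable def XHam (K f : (Fin 4 → ℝ) → ℝ) (x : Fin 4 → ℝ) : ℝ :=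
  pd 2 K x * pd 0 f x + pd 3 K x * pd 1 f x - pd 0 K x * pd 2 f x - pd 1 K x * pd 3 f x

namespace TTWaux


noncomputable def PQ : ℕ → ((ℝ → ℝ → ℝ) × (ℝ → ℝ → ℝ))
  | 0 => (fun _ _ => 1, fun _ _ => 0)
  | n+1 => (fun u L => u * (PQ n).1 u L - 2*L*(PQ n).2 u L,
            fun u L => u * (PQ n).2 u L + (PQ n).1 u L)

noncomputable def PQu : ℕ → ((ℝ → ℝ → ℝ) × (ℝ → ℝ → ℝ))
  | 0 => (fun _ _ => 0, fun _ _ => 0)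
  | n+1 => (fun u L => (PQ n).1 u L + u * (PQu n).1 u L - 2*L*(PQu n).2 u L,
            fun u L => (PQ n).2 u L + u * (PQu n).2 u L + (PQu n).1 u L)

noncomputable def PQL : ℕ → ((ℝ → ℝ → ℝ) × (ℝ → ℝ → ℝ))
  | 0 => (fun _ _ => 0, fun _ _ => 0)
  | n+1 => (fun u L => u * (PQL n).1 u L - 2*(PQ n).2 u L - 2*L*(PQL n).2 u L,
            fun u L => u * (PQL n).2 u L + (PQL n).1 u L)

def Nice (A Au AL : ℝ → ℝ → ℝ) : Prop :=
  (∀ u L, HasDerivAt (fun t => A t L) (Au u L) u) ∧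
  (∀ u L, HasDerivAt (fun t => A u t) (AL u L) L)

lemma nice_PQ (n : ℕ) :
    Nice (PQ n).1 (PQu n).1 (PQL n).1 ∧ Nice (PQ n).2 (PQu n).2 (PQL n).2 := by
  induction n with
  | zero =>
    refine ⟨⟨fun u L => ?_, fun u L => ?_⟩, ⟨fun u L => ?_, fun u L => ?_⟩⟩ <;>
      · simp only [PQ, PQu, PQL]
        exact hasDerivAt_const _ _
  | succ n ih =>
    obtain ⟨⟨hP1, hP2⟩, ⟨hQ1, hQ2⟩⟩ := ih
    refine ⟨⟨fun u L => ?_, fun u L => ?_⟩, ⟨fun u L => ?_, fun u L => ?_⟩⟩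
    · have h := ((hasDerivAt_id u).mul (hP1 u L)).sub ((hQ1 u L).const_mul (2*L))
      simp only [PQ, PQu]
      exact h.congr_deriv (by simp only [id_eq]; ring)
    · have h := ((hP2 u L).const_mul u).sub
        (((hasDerivAt_id L).const_mul 2).mul (hQ2 u L))
      simp only [PQ, PQL]
      exact h.congr_deriv (by simp only [id_eq]; ring)
    · have h := ((hasDerivAt_id u).mul (hQ1 u L)).add (hP1 u L)
      simp only [PQ, PQu]
      exact h.congr_deriv (by simp only [id_eq]; ring)
    · have h := ((hQ2 u L).const_mul u).add (hP2 u L)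
      simp only [PQ, PQL]
      exact h.congr_deriv (by ring)

lemma inv_PQ (n : ℕ) (u L : ℝ) :
    (u^2+2*L) * (PQu n).1 u L = n*u*(PQ n).1 u L + 2*n*L*(PQ n).2 u L ∧
    (u^2+2*L) * (PQu n).2 u L = n*u*(PQ n).2 u L - n*(PQ n).1 u L := by
  induction n with
  | zero => simp [PQ, PQu]
  | succ n ih =>
    obtain ⟨h1, h2⟩ := ih
    constructor
    · simp only [PQ, PQu]
      push_cast
      linear_combination u * h1 - 2*L*h2 + (u^2+2*L) * 0
    · simp only [PQ, PQu]
      push_cast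
      linear_combination u * h2 + h1



noncomputable def Ff (m k ψ₀ : ℝ) (ψ : ℝ) : ℝ := k / (sin (m * ψ + ψ₀))^2

noncomputable def Lv (m k ψ₀ : ℝ) (x : Fin 4 → ℝ) : ℝ :=
  (1/2)*(x 3)^2 + Ff m k ψ₀ (x 1)

noncomputable def cf (m k ψ₀ : ℝ) (A B : ℝ → ℝ → ℝ) (n : ℕ) (x : Fin 4 → ℝ) : ℝ :=
  (A (x 0 * x 2) (Lv m k ψ₀ x) * cos (m * x 1 + ψ₀)
    - B (x 0 * x 2) (Lv m k ψ₀ x) * (x 3 * sin (m * x 1 + ψ₀)))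
  / (x 0)^n


lemma hasDerivAt_sin_lin (m ψ₀ t : ℝ) :
    HasDerivAt (fun u => sin (m * u + ψ₀)) (m * cos (m * t + ψ₀)) t := by
  have h1 : HasDerivAt (fun u : ℝ => m * u + ψ₀) m t :=
    by simpa using ((hasDerivAt_id t).const_mul m).add_const ψ₀
  refine ((Real.hasDerivAt_sin (m * t + ψ₀)).comp t h1).congr_deriv ?_; ring

lemma hasDerivAt_cos_lin (m ψ₀ t : ℝ) :
    HasDerivAt (fun u => cos (m * u + ψ₀)) (-(m * sin (m * t + ψ₀))) t := by
  have h1 : HasDerivAt (fun u : ℝ => m * u + ψ₀) m t :=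
    by simpa using ((hasDerivAt_id t).const_mul m).add_const ψ₀
  have := (Real.hasDerivAt_cos (m * t + ψ₀)).comp t h1
  exact this.congr_deriv (by ring)

lemma hasDerivAt_Ff {m k ψ₀ t : ℝ} (hσ : sin (m * t + ψ₀) ≠ 0) :
    HasDerivAt (Ff m k ψ₀) (-2*m*k*cos (m*t+ψ₀)/(sin (m*t+ψ₀))^3) t := by
  have hs2 : HasDerivAt (fun u => (sin (m*u+ψ₀))^2)
      ((2:ℕ) * (sin (m*t+ψ₀))^1 * (m * cos (m*t+ψ₀))) t :=
    (hasDerivAt_sin_lin m ψ₀ t).pow 2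
  have h := (hasDerivAt_const t k).div hs2 (pow_ne_zero 2 hσ)
  refine h.congr_deriv ?_
  field_simp
  ring

lemma hden_pow {t : ℝ} (ht : t ≠ 0) (n : ℕ) :
    HasDerivAt (fun s : ℝ => s^n) ((n:ℝ) * t^n / t) t := by
  have h := hasDerivAt_pow n t
  refine h.congr_deriv ?_
  cases n with
  | zero => simp
  | succ n => rw [Nat.add_sub_cancel]; field_simp [pow_succ]; ring

section pdcf
variable {m k ψ₀ : ℝ} {A Au AL B Bu BL : ℝ → ℝ → ℝ} {x : Fin 4 → ℝ} {n : ℕ}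

lemma pd0_cf (hA : Nice A Au AL) (hB : Nice B Bu BL) (hr : x 0 ≠ 0) :
    pd 0 (cf m k ψ₀ A B n) x =
      (x 2 * Au (x 0 * x 2) (Lv m k ψ₀ x) * cos (m * x 1 + ψ₀)
        - x 2 * Bu (x 0 * x 2) (Lv m k ψ₀ x) * (x 3 * sin (m * x 1 + ψ₀))) / (x 0)^n
      - (n:ℝ) * (A (x 0 * x 2) (Lv m k ψ₀ x) * cos (m * x 1 + ψ₀)
        - B (x 0 * x 2) (Lv m k ψ₀ x) * (x 3 * sin (m * x 1 + ψ₀))) / (x 0)^(n+1) := by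
  unfold pd
  have hupd : (fun t => cf m k ψ₀ A B n (Function.update x 0 t))
      = fun t => (A (t * x 2) (Lv m k ψ₀ x) * cos (m * x 1 + ψ₀)
          - B (t * x 2) (Lv m k ψ₀ x) * (x 3 * sin (m * x 1 + ψ₀))) / t^n := by
    funext t
    simp [cf, Lv, Ff, Function.update_apply]
  rw [hupd]
  have hmul : HasDerivAt (fun t : ℝ => t * x 2) (x 2) (x 0) := by
    simpa using (hasDerivAt_id (x 0)).mul_const (x 2)
  have hAc : HasDerivAt (fun t => A (t * x 2) (Lv m k ψ₀ x))
      (Au (x 0 * x 2) (Lv m k ψ₀ x) * x 2) (x 0) := (hA.1 _ _).comp _ hmul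
  have hBc : HasDerivAt (fun t => B (t * x 2) (Lv m k ψ₀ x))
      (Bu (x 0 * x 2) (Lv m k ψ₀ x) * x 2) (x 0) := (hB.1 _ _).comp _ hmul
  have hN := (hAc.mul_const (cos (m * x 1 + ψ₀))).sub
    (hBc.mul_const (x 3 * sin (m * x 1 + ψ₀)))
  have h := hN.div (hden_pow hr n) (pow_ne_zero n hr)
  refine h.deriv.trans ?_
  simp only [Pi.sub_apply]
  field_simp
  ring

lemma pd2_cf (hA : Nice A Au AL) (hB : Nice B Bu BL) :
    pd 2 (cf m k ψ₀ A B n) x =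
      (x 0 * Au (x 0 * x 2) (Lv m k ψ₀ x) * cos (m * x 1 + ψ₀)
        - x 0 * Bu (x 0 * x 2) (Lv m k ψ₀ x) * (x 3 * sin (m * x 1 + ψ₀))) / (x 0)^n := by
  unfold pd
  have hupd : (fun t => cf m k ψ₀ A B n (Function.update x 2 t))
      = fun t => (A (x 0 * t) (Lv m k ψ₀ x) * cos (m * x 1 + ψ₀)
          - B (x 0 * t) (Lv m k ψ₀ x) * (x 3 * sin (m * x 1 + ψ₀))) / (x 0)^n := by
    funext t
    simp [cf, Lv, Ff, Function.update_apply]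
  rw [hupd]
  have hmul : HasDerivAt (fun t : ℝ => x 0 * t) (x 0) (x 2) := by
    simpa using (hasDerivAt_id (x 2)).const_mul (x 0)
  have hAc : HasDerivAt (fun t => A (x 0 * t) (Lv m k ψ₀ x))
      (Au (x 0 * x 2) (Lv m k ψ₀ x) * x 0) (x 2) := (hA.1 _ _).comp _ hmul
  have hBc : HasDerivAt (fun t => B (x 0 * t) (Lv m k ψ₀ x))
      (Bu (x 0 * x 2) (Lv m k ψ₀ x) * x 0) (x 2) := (hB.1 _ _).comp _ hmul
  have h := ((hAc.mul_const (cos (m * x 1 + ψ₀))).sub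
    (hBc.mul_const (x 3 * sin (m * x 1 + ψ₀)))).div_const ((x 0)^n)
  refine h.deriv.trans ?_
  ring

lemma pd3_cf (hA : Nice A Au AL) (hB : Nice B Bu BL) :
    pd 3 (cf m k ψ₀ A B n) x =
      (AL (x 0 * x 2) (Lv m k ψ₀ x) * x 3 * cos (m * x 1 + ψ₀)
        - (BL (x 0 * x 2) (Lv m k ψ₀ x) * x 3 * (x 3 * sin (m * x 1 + ψ₀))
           + B (x 0 * x 2) (Lv m k ψ₀ x) * sin (m * x 1 + ψ₀))) / (x 0)^n := by
  unfold pd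
  have hupd : (fun t => cf m k ψ₀ A B n (Function.update x 3 t))
      = fun t => (A (x 0 * x 2) ((1/2)*t^2 + Ff m k ψ₀ (x 1)) * cos (m * x 1 + ψ₀)
          - B (x 0 * x 2) ((1/2)*t^2 + Ff m k ψ₀ (x 1)) * (t * sin (m * x 1 + ψ₀)))
          / (x 0)^n := by
    funext t
    simp [cf, Lv, Ff, Function.update_apply]
  rw [hupd]
  have hL3 : HasDerivAt (fun t : ℝ => (1/2)*t^2 + Ff m k ψ₀ (x 1)) (x 3) (x 3) := by
    have := ((hasDerivAt_pow 2 (x 3)).const_mul (1/2 : ℝ)).add_const (Ff m k ψ₀ (x 1))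
    refine this.congr_deriv ?_
    push_cast
    ring
  have hAc : HasDerivAt (fun t : ℝ => A (x 0 * x 2) ((1/2)*t^2 + Ff m k ψ₀ (x 1)))
      (AL (x 0 * x 2) (Lv m k ψ₀ x) * x 3) (x 3) := by
    exact (hA.2 (x 0 * x 2) (Lv m k ψ₀ x)).comp (x 3) hL3
  have hBc : HasDerivAt (fun t : ℝ => B (x 0 * x 2) ((1/2)*t^2 + Ff m k ψ₀ (x 1)))
      (BL (x 0 * x 2) (Lv m k ψ₀ x) * x 3) (x 3) := by
    exact (hB.2 (x 0 * x 2) (Lv m k ψ₀ x)).comp (x 3) hL3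
  have hsin : HasDerivAt (fun t : ℝ => t * sin (m * x 1 + ψ₀)) (sin (m * x 1 + ψ₀)) (x 3) := by
    simpa using (hasDerivAt_id (x 3)).mul_const (sin (m * x 1 + ψ₀))
  have h := ((hAc.mul_const (cos (m * x 1 + ψ₀))).sub
    (hBc.mul (hsin))).div_const ((x 0)^n)
  refine h.deriv.trans ?_
  simp only [Lv]

lemma pd1_cf (hA : Nice A Au AL) (hB : Nice B Bu BL)
    (hσ : sin (m * x 1 + ψ₀) ≠ 0) :
    pd 1 (cf m k ψ₀ A B n) x =
      ((AL (x 0 * x 2) (Lv m k ψ₀ x) * (-2*m*k*cos (m*x 1+ψ₀)/(sin (m*x 1+ψ₀))^3))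
          * cos (m * x 1 + ψ₀)
        + A (x 0 * x 2) (Lv m k ψ₀ x) * (-(m * sin (m * x 1 + ψ₀)))
        - ((BL (x 0 * x 2) (Lv m k ψ₀ x) * (-2*m*k*cos (m*x 1+ψ₀)/(sin (m*x 1+ψ₀))^3))
            * (x 3 * sin (m * x 1 + ψ₀))
           + B (x 0 * x 2) (Lv m k ψ₀ x) * (x 3 * (m * cos (m * x 1 + ψ₀)))))
      / (x 0)^n := by
  unfold pd
  have hupd : (fun t => cf m k ψ₀ A B n (Function.update x 1 t))
      = fun t => (A (x 0 * x 2) ((1/2)*(x 3)^2 + Ff m k ψ₀ t) * cos (m * t + ψ₀)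
          - B (x 0 * x 2) ((1/2)*(x 3)^2 + Ff m k ψ₀ t) * (x 3 * sin (m * t + ψ₀)))
          / (x 0)^n := by
    funext t
    simp [cf, Lv, Ff, Function.update_apply]
  rw [hupd]
  have hL1 : HasDerivAt (fun t : ℝ => (1/2)*(x 3)^2 + Ff m k ψ₀ t)
      (-2*m*k*cos (m*x 1+ψ₀)/(sin (m*x 1+ψ₀))^3) (x 1) :=
    (hasDerivAt_Ff hσ).const_add _
  have hAc : HasDerivAt (fun t : ℝ => A (x 0 * x 2) ((1/2)*(x 3)^2 + Ff m k ψ₀ t))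
      (AL (x 0 * x 2) (Lv m k ψ₀ x) * (-2*m*k*cos (m*x 1+ψ₀)/(sin (m*x 1+ψ₀))^3)) (x 1) :=
    (hA.2 (x 0 * x 2) (Lv m k ψ₀ x)).comp (x 1) hL1
  have hBc : HasDerivAt (fun t : ℝ => B (x 0 * x 2) ((1/2)*(x 3)^2 + Ff m k ψ₀ t))
      (BL (x 0 * x 2) (Lv m k ψ₀ x) * (-2*m*k*cos (m*x 1+ψ₀)/(sin (m*x 1+ψ₀))^3)) (x 1) :=
    (hB.2 (x 0 * x 2) (Lv m k ψ₀ x)).comp (x 1) hL1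
  have hsin : HasDerivAt (fun t : ℝ => x 3 * sin (m * t + ψ₀))
      (x 3 * (m * cos (m * x 1 + ψ₀))) (x 1) :=
    (hasDerivAt_sin_lin m ψ₀ (x 1)).const_mul (x 3)
  have h := ((hAc.mul (hasDerivAt_cos_lin m ψ₀ (x 1))).sub
    (hBc.mul hsin)).div_const ((x 0)^n)
  refine h.deriv.trans ?_
  simp only [Lv]

end pdcf

section pdH
variable {m k ψ₀ : ℝ} {x : Fin 4 → ℝ}

lemma pd0_H (hr : x 0 ≠ 0) :
    pd 0 (Hfun (Ff m k ψ₀)) x = -2 * Lv m k ψ₀ x / (x 0)^3 := by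
  unfold pd
  have hupd : (fun t => Hfun (Ff m k ψ₀) (Function.update x 0 t))
      = fun t => (1/2)*(x 2)^2 + (1/t^2) * Lv m k ψ₀ x := by
    funext t
    simp [Hfun, Lv, Ff, Function.update_apply]
  rw [hupd]
  have h1 : HasDerivAt (fun t : ℝ => 1/t^2)
      ((0 * (x 0)^2 - 1 * ((2:ℕ)*(x 0)^1)) / ((x 0)^2)^2) (x 0) :=
    (hasDerivAt_const (x 0) 1).div (hasDerivAt_pow 2 (x 0)) (pow_ne_zero 2 hr)
  have h := ((h1.mul_const (Lv m k ψ₀ x)).const_add ((1/2)*(x 2)^2))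
  rw [h.deriv]
  field_simp
  ring

lemma pd1_H (hσ : sin (m * x 1 + ψ₀) ≠ 0) :
    pd 1 (Hfun (Ff m k ψ₀)) x
      = (1/(x 0)^2) * (-2*m*k*cos (m*x 1+ψ₀)/(sin (m*x 1+ψ₀))^3) := by
  unfold pd
  have hupd : (fun t => Hfun (Ff m k ψ₀) (Function.update x 1 t))
      = fun t => (1/2)*(x 2)^2 + (1/(x 0)^2) * ((1/2)*(x 3)^2 + Ff m k ψ₀ t) := by
    funext t
    simp [Hfun, Ff, Function.update_apply]
  rw [hupd]
  have h : HasDerivAt (fun t => (1/2)*(x 2)^2 + (1/(x 0)^2) * ((1/2)*(x 3)^2 + Ff m k ψ₀ t))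
      ((1/(x 0)^2) * (-2*m*k*cos (m*x 1+ψ₀)/(sin (m*x 1+ψ₀))^3)) (x 1) :=
    (((hasDerivAt_Ff hσ).const_add ((1/2)*(x 3)^2)).const_mul
      (1/(x 0)^2)).const_add ((1/2)*(x 2)^2)
  rw [h.deriv]

lemma pd2_H : pd 2 (Hfun (Ff m k ψ₀)) x = x 2 := by
  unfold pd
  have hupd : (fun t => Hfun (Ff m k ψ₀) (Function.update x 2 t))
      = fun t => (1/2)*t^2 + (1/(x 0)^2) * ((1/2)*(x 3)^2 + Ff m k ψ₀ (x 1)) := by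
    funext t
    simp [Hfun, Ff, Function.update_apply]
  rw [hupd]
  have h := (((hasDerivAt_pow 2 (x 2)).const_mul (1/2 : ℝ)).add_const
    ((1/(x 0)^2) * ((1/2)*(x 3)^2 + Ff m k ψ₀ (x 1))))
  rw [h.deriv]
  push_cast
  ring

lemma pd3_H : pd 3 (Hfun (Ff m k ψ₀)) x = (1/(x 0)^2) * x 3 := by
  unfold pd
  have hupd : (fun t => Hfun (Ff m k ψ₀) (Function.update x 3 t))
      = fun t => (1/2)*(x 2)^2 + (1/(x 0)^2) * ((1/2)*t^2 + Ff m k ψ₀ (x 1)) := by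
    funext t
    simp [Hfun, Ff, Function.update_apply]
  rw [hupd]
  have h := ((((hasDerivAt_pow 2 (x 3)).const_mul (1/2 : ℝ)).add_const
    (Ff m k ψ₀ (x 1))).const_mul (1/(x 0)^2)).const_add ((1/2)*(x 2)^2)
  rw [h.deriv]
  push_cast
  ring

end pdH


lemma deriv_Ff {m k ψ₀ t : ℝ} (hσ : sin (m * t + ψ₀) ≠ 0) :
    deriv (Ff m k ψ₀) t = -2*m*k*cos (m*t+ψ₀)/(sin (m*t+ψ₀))^3 :=
  (hasDerivAt_Ff hσ).deriv

def Sset (m ψ₀ : ℝ) : Set (Fin 4 → ℝ) :=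
  {x | 0 < x 0 ∧ sin (m * x 1 + ψ₀) ≠ 0}

lemma isOpen_Sset (m ψ₀ : ℝ) : IsOpen (Sset m ψ₀) := by
  have h1 : IsOpen {x : Fin 4 → ℝ | 0 < x 0} :=
    isOpen_lt continuous_const (continuous_apply 0)
  have h2 : IsOpen {x : Fin 4 → ℝ | sin (m * x 1 + ψ₀) ≠ 0} :=
    isOpen_ne_fun (by continuity) continuous_const
  exact h1.inter h2

variable {m k ψ₀ : ℝ} {A Au AL B Bu BL : ℝ → ℝ → ℝ} {x : Fin 4 → ℝ} {n : ℕ}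

lemma XL_cf (hA : Nice A Au AL) (hB : Nice B Bu BL)
    (hσ : sin (m * x 1 + ψ₀) ≠ 0) (hr : x 0 ≠ 0) :
    XL (Ff m k ψ₀) (cf m k ψ₀ A B n) x
      = cf m k ψ₀ (fun u L => -(2*m*L*B u L)) (fun u L => m * A u L) n x := by
  unfold XL
  rw [pd1_cf hA hB hσ, pd3_cf hA hB, deriv_Ff hσ]
  simp only [cf]
  rw [show Lv m k ψ₀ x = (1/2)*(x 3)^2 + k/(sin (m * x 1 + ψ₀))^2 from rfl]
  field_simp
  ring

lemma Uop_cf (hA : Nice A Au AL) (hB : Nice B Bu BL) (hm : m ≠ 0)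
    (hσ : sin (m * x 1 + ψ₀) ≠ 0) (hr : x 0 ≠ 0) :
    Uop (1/m) (Ff m k ψ₀) (cf m k ψ₀ A B n) x
      = cf m k ψ₀ (fun u L => u * A u L - 2*L*B u L)
          (fun u L => u * B u L + A u L) (n+1) x := by
  unfold Uop
  rw [XL_cf hA hB hσ hr]
  simp only [cf]
  field_simp
  ring

lemma pd_congr {f g : (Fin 4 → ℝ) → ℝ} {U : Set (Fin 4 → ℝ)} (hU : IsOpen U)
    (hfg : ∀ y ∈ U, f y = g y) {x : Fin 4 → ℝ} (hx : x ∈ U) (i : Fin 4) :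
    pd i f x = pd i g x := by
  unfold pd
  apply Filter.EventuallyEq.deriv_eq
  have hc : ContinuousAt (fun t : ℝ => Function.update x i t) (x i) :=
    (continuous_const.update i continuous_id).continuousAt
  have hmem : Function.update x i (x i) ∈ U := by
    rw [Function.update_eq_self]; exact hx
  filter_upwards [hc.preimage_mem_nhds (hU.mem_nhds hmem)] with t ht using hfg _ ht

lemma XL_congr {F : ℝ → ℝ} {f g : (Fin 4 → ℝ) → ℝ} {U : Set (Fin 4 → ℝ)}
    (hU : IsOpen U) (hfg : ∀ y ∈ U, f y = g y) {x : Fin 4 → ℝ} (hx : x ∈ U) :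
    XL F f x = XL F g x := by
  unfold XL
  rw [pd_congr hU hfg hx 1, pd_congr hU hfg hx 3]

lemma Uop_congr {μ : ℝ} {F : ℝ → ℝ} {f g : (Fin 4 → ℝ) → ℝ} {U : Set (Fin 4 → ℝ)}
    (hU : IsOpen U) (hfg : ∀ y ∈ U, f y = g y) {x : Fin 4 → ℝ} (hx : x ∈ U) :
    Uop μ F f x = Uop μ F g x := by
  unfold Uop
  rw [XL_congr hU hfg hx, hfg x hx]

lemma XHam_congr {K f g : (Fin 4 → ℝ) → ℝ} {U : Set (Fin 4 → ℝ)}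
    (hU : IsOpen U) (hfg : ∀ y ∈ U, f y = g y) {x : Fin 4 → ℝ} (hx : x ∈ U) :
    XHam K f x = XHam K g x := by
  unfold XHam
  rw [pd_congr hU hfg hx 0, pd_congr hU hfg hx 1, pd_congr hU hfg hx 2,
    pd_congr hU hfg hx 3]

lemma XHam_cf (hA : Nice A Au AL) (hB : Nice B Bu BL)
    (hr : x 0 ≠ 0) (hσ : sin (m * x 1 + ψ₀) ≠ 0) (hn : (n:ℝ) = m)
    (h1 : ∀ u L, (u^2+2*L) * Au u L = m*u*A u L + 2*m*L*B u L)
    (h2 : ∀ u L, (u^2+2*L) * Bu u L = m*u*B u L - m*A u L) :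
    XHam (Hfun (Ff m k ψ₀)) (cf m k ψ₀ A B n) x = 0 := by
  calc XHam (Hfun (Ff m k ψ₀)) (cf m k ψ₀ A B n) x
      = x 2 * ((x 2 * Au (x 0 * x 2) (Lv m k ψ₀ x) * cos (m * x 1 + ψ₀)
            - x 2 * Bu (x 0 * x 2) (Lv m k ψ₀ x) * (x 3 * sin (m * x 1 + ψ₀))) / (x 0)^n
          - (n:ℝ) * (A (x 0 * x 2) (Lv m k ψ₀ x) * cos (m * x 1 + ψ₀)
            - B (x 0 * x 2) (Lv m k ψ₀ x) * (x 3 * sin (m * x 1 + ψ₀))) / (x 0)^(n+1))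
        + (1/(x 0)^2) * x 3 *
          (((AL (x 0 * x 2) (Lv m k ψ₀ x) * (-2*m*k*cos (m*x 1+ψ₀)/(sin (m*x 1+ψ₀))^3))
              * cos (m * x 1 + ψ₀)
            + A (x 0 * x 2) (Lv m k ψ₀ x) * (-(m * sin (m * x 1 + ψ₀)))
            - ((BL (x 0 * x 2) (Lv m k ψ₀ x) * (-2*m*k*cos (m*x 1+ψ₀)/(sin (m*x 1+ψ₀))^3))
                * (x 3 * sin (m * x 1 + ψ₀))
               + B (x 0 * x 2) (Lv m k ψ₀ x) * (x 3 * (m * cos (m * x 1 + ψ₀)))))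
          / (x 0)^n)
        - (-2 * Lv m k ψ₀ x / (x 0)^3) *
          ((x 0 * Au (x 0 * x 2) (Lv m k ψ₀ x) * cos (m * x 1 + ψ₀)
            - x 0 * Bu (x 0 * x 2) (Lv m k ψ₀ x) * (x 3 * sin (m * x 1 + ψ₀))) / (x 0)^n)
        - ((1/(x 0)^2) * (-2*m*k*cos (m*x 1+ψ₀)/(sin (m*x 1+ψ₀))^3)) *
          ((AL (x 0 * x 2) (Lv m k ψ₀ x) * x 3 * cos (m * x 1 + ψ₀)
            - (BL (x 0 * x 2) (Lv m k ψ₀ x) * x 3 * (x 3 * sin (m * x 1 + ψ₀))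
               + B (x 0 * x 2) (Lv m k ψ₀ x) * sin (m * x 1 + ψ₀))) / (x 0)^n) := by
        unfold XHam
        rw [pd2_H, pd0_cf hA hB hr, pd3_H, pd1_cf hA hB hσ, pd0_H hr,
          pd2_cf hA hB, pd1_H hσ, pd3_cf hA hB]
    _ = (cos (m * x 1 + ψ₀) *
          (((x 0 * x 2)^2 + 2 * Lv m k ψ₀ x) * Au (x 0 * x 2) (Lv m k ψ₀ x)
            - m * (x 0 * x 2) * A (x 0 * x 2) (Lv m k ψ₀ x)
            - 2 * m * Lv m k ψ₀ x * B (x 0 * x 2) (Lv m k ψ₀ x))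
        - x 3 * sin (m * x 1 + ψ₀) *
          (((x 0 * x 2)^2 + 2 * Lv m k ψ₀ x) * Bu (x 0 * x 2) (Lv m k ψ₀ x)
            - m * (x 0 * x 2) * B (x 0 * x 2) (Lv m k ψ₀ x)
            + m * A (x 0 * x 2) (Lv m k ψ₀ x))) / (x 0)^(n+2) := by
        rw [hn, show Lv m k ψ₀ x = (1/2)*(x 3)^2 + k/(sin (m * x 1 + ψ₀))^2 from rfl]
        field_simp
        ring
    _ = 0 := by
        rw [show ((x 0 * x 2)^2 + 2 * Lv m k ψ₀ x) * Au (x 0 * x 2) (Lv m k ψ₀ x)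
            - m * (x 0 * x 2) * A (x 0 * x 2) (Lv m k ψ₀ x)
            - 2 * m * Lv m k ψ₀ x * B (x 0 * x 2) (Lv m k ψ₀ x) = 0 from by
              linear_combination h1 (x 0 * x 2) (Lv m k ψ₀ x),
          show ((x 0 * x 2)^2 + 2 * Lv m k ψ₀ x) * Bu (x 0 * x 2) (Lv m k ψ₀ x)
            - m * (x 0 * x 2) * B (x 0 * x 2) (Lv m k ψ₀ x)
            + m * A (x 0 * x 2) (Lv m k ψ₀ x) = 0 from by
              linear_combination h2 (x 0 * x 2) (Lv m k ψ₀ x)]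
        simp


end TTWaux

/-- With `F(ψ) = k/sin²(λψ+ψ₀)`, `G(ψ) = cos(λψ+ψ₀)` and `I_λ = U^λ G`, for any `ν ∈ ℕ`
the function `X_L^ν(I_λ)` is also a first integral of `H = ½p_r² + (1/r²)(½p_ψ² + F)`. -/
theorem XL_power_of_integral (lam : ℕ) (hlam : 0 < lam) (ν : ℕ) (k ψ₀ : ℝ)
    (x : Fin 4 → ℝ) (hr : 0 < x 0) (hs : sin (lam * x 1 + ψ₀) ≠ 0) :
    XHam (Hfun (fun ψ => k / (sin (lam * ψ + ψ₀))^2))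
      ((XL (fun ψ => k / (sin (lam * ψ + ψ₀))^2))^[ν]
        ((Uop (1 / lam) (fun ψ => k / (sin (lam * ψ + ψ₀))^2))^[lam]
          (fun y => cos (lam * y 1 + ψ₀)))) x = 0 := by
  classical
  open TTWaux in
  set m : ℝ := (lam : ℝ) with hmdef
  have hm : m ≠ 0 := by
    simp only [hmdef]
    exact_mod_cast hlam.ne'
  have hopen := isOpen_Sset m ψ₀
  have hxU : x ∈ Sset m ψ₀ := ⟨hr, hs⟩
  -- Step 1: the U-iterates have the closed form with coefficients `PQ`.
  have hIter : ∀ j : ℕ, ∀ y ∈ Sset m ψ₀,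
      (Uop (1 / m) (Ff m k ψ₀))^[j] (fun y => cos (m * y 1 + ψ₀)) y
        = cf m k ψ₀ (PQ j).1 (PQ j).2 j y := by
    intro j
    induction j with
    | zero =>
      intro y hy
      simp [cf, PQ]
    | succ j ih =>
      intro y hy
      rw [Function.iterate_succ_apply']
      rw [Uop_congr hopen ih hy]
      exact Uop_cf (nice_PQ j).1 (nice_PQ j).2 hm hy.2 (ne_of_gt hy.1)
  -- Step 2: the `X_L`-iterates keep the closed form and the key identities.
  have hXLiter : ∀ j : ℕ, ∃ A Au AL B Bu BL : ℝ → ℝ → ℝ,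
      Nice A Au AL ∧ Nice B Bu BL ∧
      (∀ u L, (u^2+2*L) * Au u L = m*u*A u L + 2*m*L*B u L) ∧
      (∀ u L, (u^2+2*L) * Bu u L = m*u*B u L - m*A u L) ∧
      ∀ y ∈ Sset m ψ₀,
        (XL (Ff m k ψ₀))^[j]
          ((Uop (1 / m) (Ff m k ψ₀))^[lam] (fun y => cos (m * y 1 + ψ₀))) y
          = cf m k ψ₀ A B lam y := by
    intro j
    induction j with
    | zero =>
      refine ⟨(PQ lam).1, (PQu lam).1, (PQL lam).1, (PQ lam).2, (PQu lam).2, (PQL lam).2,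
        (nice_PQ lam).1, (nice_PQ lam).2, ?_, ?_, ?_⟩
      · intro u L
        simpa [hmdef] using (inv_PQ lam u L).1
      · intro u L
        simpa [hmdef] using (inv_PQ lam u L).2
      · intro y hy
        simpa using hIter lam y hy
    | succ j ih =>
      obtain ⟨A, Au, AL, B, Bu, BL, hA, hB, h1, h2, heq⟩ := ih
      refine ⟨(fun u L => -(2*m*L*B u L)), (fun u L => -(2*m*L*Bu u L)),
        (fun u L => -(2*m*B u L + 2*m*L*BL u L)),
        (fun u L => m * A u L), (fun u L => m * Au u L), (fun u L => m * AL u L),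
        ⟨fun u L => ?_, fun u L => ?_⟩, ⟨fun u L => ?_, fun u L => ?_⟩,
        ?_, ?_, ?_⟩
      · exact ((hB.1 u L).const_mul (2*m*L)).neg
      · have hlin : HasDerivAt (fun t : ℝ => 2*m*t) (2*m) L := by
          simpa using (hasDerivAt_id L).const_mul (2*m)
        exact (hlin.mul (hB.2 u L)).neg
      · exact (hA.1 u L).const_mul m
      · exact (hA.2 u L).const_mul m
      · intro u L
        linear_combination (-(2*m*L)) * (h2 u L)
      · intro u L
        linear_combination m * (h1 u L)
      · intro y hy
        rw [Function.iterate_succ_apply']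
        rw [XL_congr hopen heq hy]
        exact XL_cf hA hB hy.2 (ne_of_gt hy.1)
  obtain ⟨A, Au, AL, B, Bu, BL, hA, hB, h1, h2, heq⟩ := hXLiter ν
  rw [show (fun ψ => k / (sin ((lam:ℝ) * ψ + ψ₀))^2) = Ff m k ψ₀ from rfl]
  rw [XHam_congr hopen heq hxU]
  exact XHam_cf hA hB (ne_of_gt hr) hs rfl h1 h2
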